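/- Let N be an admissible algebra with pointing ω (a linear form with ω(Ann(N)) = F), W := ker(ω), and define the symmetric bilinear form ω₂(x,y) = ω(xy) and trilinear form ω₃(x,y,z) = ω(xyz) on W. Define a product x∙y on W by ω₂(x∙y, z) = ω₃(x,y,z) for all z ∈ W (well-defined since ω₂ is non-degenerate on W), and on W ⊕ F the product (x,s)(y,t) := (x∙y, ω₂(x,y)). Then the linear map W ⊕ F → N, (x,s) ↦ x + ψ(s), where ψ : F → Ann(N) is the unique linear isomorphism with ψ∘ω equal to the projection of N = W ⊕ Ann(N) onto Ann(N), is an algebra isomorphism. -/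

import Mathlib

/-- `pw F N k` is the characteristic ideal `N^k`. -/
def pw (F N : Type*) [Field F] [NonUnitalNonAssocRing N] [Module F N] : ℕ → Submodule F N
  | 0 => ⊤
  | 1 => ⊤
  | (k+2) => Submodule.span F {z : N | ∃ x : N, ∃ y ∈ pw F N (k+1), z = x * y}

/-- The annihilator `Ann(N) = {x | x·N = 0}` of a commutative algebra `N`. -/
def annSub (F N : Type*) [Field F] [NonUnitalCommRing N] [Module F N]
    [SMulCommClass F N N] [IsScalarTower F N N] : Submodule F N where
  carrier := {x | ∀ y : N, x * y = 0}
  add_mem' := by intro a b ha hb y; simp [add_mul, ha y, hb y]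
  zero_mem' := by intro y; simp
  smul_mem' := by intro c x hx y; rw [smul_mul_assoc, hx y, smul_zero]


section Aux

variable {F N : Type*} [Field F] [NonUnitalCommRing N] [Module F N]
    [SMulCommClass F N N] [IsScalarTower F N N] [FiniteDimensional F N]

lemma annSub_mem_iff {x : N} : x ∈ annSub F N ↔ ∀ y : N, x * y = 0 := Iff.rfl

lemma ann_unique (hAnn : Module.finrank F (annSub F N) = 1)
    (ω : N →ₗ[F] F) (hω : ∃ a ∈ annSub F N, ω a ≠ 0)
    {b : N} (hb : b ∈ annSub F N) (hωb : ω b = 0) : b = 0 := by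
  obtain ⟨a, ha, hωa⟩ := hω
  have hane : (⟨a, ha⟩ : annSub F N) ≠ 0 := by
    intro h
    apply hωa
    have : a = 0 := congrArg Subtype.val h
    simp [this]
  obtain ⟨c, hc⟩ := (finrank_eq_one_iff_of_nonzero' (⟨a, ha⟩ : annSub F N) hane).mp hAnn
    ⟨b, hb⟩
  have hcb : c • a = b := congrArg Subtype.val hc
  have : c * ω a = 0 := by
    have hsm : ω (c • a) = 0 := by rw [hcb, hωb]
    simpa [smul_eq_mul] using hsm
  have hc0 : c = 0 := by
    rcases mul_eq_zero.mp this with h | h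
    · exact h
    · exact absurd h hωa
  rw [← hcb, hc0, zero_smul]

lemma nondeg (hAnn : Module.finrank F (annSub F N) = 1)
    (hnil : ∃ m : ℕ, pw F N (m + 1) = ⊥)
    (ω : N →ₗ[F] F) (hω : ∃ a ∈ annSub F N, ω a ≠ 0)
    {v : N} (hv : ω v = 0) (h2 : ∀ z : N, ω z = 0 → ω (v * z) = 0) : v = 0 := by
  classical
  -- Step A: ω (v * n) = 0 for all n
  have hall : ∀ n : N, ω (v * n) = 0 := by
    intro n
    obtain ⟨a, ha, hωa⟩ := hω
    set c : F := ω n / ω a with hc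
    have hz : ω (n - c • a) = 0 := by
      simp only [map_sub, map_smul, smul_eq_mul, hc]
      field_simp
      simp
    have hva : v * a = 0 := by rw [mul_comm]; exact ha v
    have : v * n = v * (n - c • a) + c • (v * a) := by
      rw [mul_sub, mul_smul_comm]
      abel
    rw [this, hva, smul_zero, add_zero]
    exact h2 _ hz
  by_cases hva : v ∈ annSub F N
  · exact ann_unique hAnn ω hω hva hv
  · exfalso
    rw [annSub_mem_iff] at hva
    push_neg at hva
    obtain ⟨n0, hn0⟩ := hva
    set Q : ℕ → Prop := fun k => ∀ y ∈ pw F N (k + 1), v * y = 0 with hQdef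
    obtain ⟨M, hM⟩ := hnil
    have hex : ∃ k, Q k := by
      refine ⟨M, fun y hy => ?_⟩
      rw [hM, Submodule.mem_bot] at hy
      simp [hy]
    set k := Nat.find hex with hkdef
    have hk : Q k := Nat.find_spec hex
    have hk0 : k ≠ 0 := by
      intro h
      apply hn0
      have h1 : pw F N 1 = ⊤ := rfl
      exact hk n0 (by rw [h, h1]; trivial)
    obtain ⟨j, hj⟩ := Nat.exists_eq_succ_of_ne_zero hk0
    have hQj : ¬ Q j := Nat.find_min hex (by omega)
    simp only [hQdef, not_forall] at hQj
    obtain ⟨y, hy, hvy⟩ := hQj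
    have hAnnvy : v * y ∈ annSub F N := by
      intro z
      have hyz : y * z ∈ pw F N (j + 2) := by
        have : pw F N (j + 2) = Submodule.span F {w : N | ∃ x : N, ∃ y' ∈ pw F N (j+1), w = x * y'} := rfl
        rw [this]
        exact Submodule.subset_span ⟨z, y, hy, (mul_comm y z)⟩
      have hk' : ∀ w ∈ pw F N (j + 2), v * w = 0 := by
        have := hk
        rw [hj] at this
        exact this
      rw [mul_assoc]
      exact hk' _ hyz
    exact hvy (ann_unique hAnn ω hω hAnnvy (hall y))

end Aux

/-- Let `N` be an admissible algebra with pointing `ω`, `W = ker ω`, and let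
`x∙y` (`m` below) be the product on `W` characterized by `ω₂(x∙y, z) = ω₃(x,y,z)`, i.e.
`ω((x∙y)·z) = ω((x·y)·z)` for all `z ∈ W`.  Let `π` be the projection of `N = W ⊕ Ann(N)`
onto `Ann(N)` and `ψ : F → Ann(N)` the linear isomorphism with `ψ ∘ ω = π`.  Then
`(x, s) ↦ x + ψ(s)` is an algebra isomorphism from `W ⊕ F` with product
`(x,s)(y,t) = (x∙y, ω₂(x,y))` onto `N`. -/
theorem stmt13 {F N : Type*} [Field F] [CharZero F] [NonUnitalCommRing N] [Module F N]
    [SMulCommClass F N N] [IsScalarTower F N N] [FiniteDimensional F N]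
    (hAnn : Module.finrank F (annSub F N) = 1)
    (hnil : ∃ m : ℕ, pw F N (m + 1) = ⊥)
    (ω : N →ₗ[F] F) (hω : ∃ a ∈ annSub F N, ω a ≠ 0)
    (π : N →ₗ[F] N) (hproj : π ∘ₗ π = π) (hrange : LinearMap.range π = annSub F N)
    (hker : LinearMap.ker π = LinearMap.ker ω)
    (ψ : F →ₗ[F] N) (hψ : ∀ x : N, ψ (ω x) = π x)
    (m : ↥(LinearMap.ker ω) → ↥(LinearMap.ker ω) → ↥(LinearMap.ker ω))
    (hm : ∀ x y z : ↥(LinearMap.ker ω), ω ((m x y : N) * z) = ω (((x : N) * y) * z)) :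
    Function.Bijective (fun p : ↥(LinearMap.ker ω) × F => (p.1 : N) + ψ p.2) ∧
      ∀ (x y : ↥(LinearMap.ker ω)) (s t : F),
        ((x : N) + ψ s) * ((y : N) + ψ t) = (m x y : N) + ψ (ω ((x : N) * y)) := by
  classical
  obtain ⟨a0, ha0, hωa0⟩ := hω
  -- ω is surjective
  have hsurj : Function.Surjective ω := fun s => ⟨(s / ω a0) • a0, by
    simp [smul_eq_mul]; field_simp⟩
  -- ω (π n) = ω n
  have hωπ : ∀ n : N, ω (π n) = ω n := by
    intro n
    have : n - π n ∈ LinearMap.ker π := by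
      have := congrArg (fun f => f n) hproj
      simp only [LinearMap.comp_apply] at this
      simp [LinearMap.mem_ker, map_sub, this]
    rw [hker, LinearMap.mem_ker, map_sub, sub_eq_zero] at this
    exact this.symm
  have hωψ : ∀ s : F, ω (ψ s) = s := by
    intro s
    obtain ⟨n, rfl⟩ := hsurj s
    rw [hψ, hωπ]
  have hψann : ∀ s : F, ψ s ∈ annSub F N := by
    intro s
    obtain ⟨n, rfl⟩ := hsurj s
    rw [hψ]
    rw [← hrange]
    exact ⟨n, rfl⟩
  constructor
  · constructor
    · rintro ⟨x, s⟩ ⟨y, t⟩ h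
      simp only at h
      have hst : s = t := by
        have := congrArg ω h
        simp only [map_add, hωψ] at this
        have hx0 : ω (x : N) = 0 := x.2
        have hy0 : ω (y : N) = 0 := y.2
        rw [hx0, hy0] at this
        simpa using this
      have hxy : (x : N) = y := by
        rw [hst] at h
        exact add_right_cancel h
      exact Prod.ext (Subtype.ext hxy) hst
    · intro n
      have hmem : n - π n ∈ LinearMap.ker ω := by
        rw [← hker, LinearMap.mem_ker, map_sub, sub_eq_zero]
        have := congrArg (fun f => f n) hproj
        simpa [LinearMap.comp_apply] using this.symm
      refine ⟨(⟨n - π n, hmem⟩, ω n), ?_⟩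
      simp [hψ, sub_add_cancel]
  · intro x y s t
    have hx0 : ω (x : N) = 0 := x.2
    have hy0 : ω (y : N) = 0 := y.2
    have hψs := hψann s
    have hψt := hψann t
    have e1 : (x : N) * ψ t = 0 := by rw [mul_comm]; exact hψt x
    have e2 : ψ s * (y : N) = 0 := hψs y
    have e3 : ψ s * ψ t = 0 := hψs (ψ t)
    have hexp : ((x : N) + ψ s) * ((y : N) + ψ t) = (x : N) * y := by
      rw [add_mul, mul_add, mul_add, e1, e2, e3]
      simp
    rw [hexp]
    -- key: x*y = m x y + ψ (ω (x*y))
    set v : N := (x : N) * y - ψ (ω ((x : N) * y)) - (m x y : N) with hvdef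
    have hψxy : ψ (ω ((x : N) * y)) = π ((x : N) * y) := hψ _
    have hωv : ω v = 0 := by
      have hm0 : ω (m x y : N) = 0 := (m x y).2
      simp [hvdef, map_sub, hωψ, hm0]
    have hv2 : ∀ z : N, ω z = 0 → ω (v * z) = 0 := by
      intro z hz
      have hπann : π ((x : N) * y) ∈ annSub F N := by rw [← hrange]; exact ⟨_, rfl⟩
      have e4 : π ((x : N) * y) * z = 0 := hπann z
      have e5 : ω ((m x y : N) * z) = ω (((x : N) * y) * z) :=
        hm x y ⟨z, hz⟩
      simp only [hvdef, sub_mul, map_sub, hψxy, e4, map_zero, e5]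
      ring
    have hv0 : v = 0 := nondeg hAnn hnil ω ⟨a0, ha0, hωa0⟩ hωv hv2
    have hfin : (x : N) * y = ψ (ω ((x : N) * y)) + (m x y : N) :=
      sub_eq_zero.mp (by simpa [hvdef, sub_sub] using hv0)
    exact hfin.trans (add_comm _ _)
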